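/- The polynomial P(x) = cx² + ax + b is a CNS polynomial if and only if (c/b, a/b) ∈ 𝒟₂⁽⁰⁾; that is, every element of ℤ[x]/Pℤ[x] has a finite digit expansion with digits in {0, 1, …, |b| − 1} if and only if for every z ∈ ℤ² some iterate of the shift radix map τ_{(c/b, a/b)} sends z to (0, 0). -/

import Mathlib

open Polynomial

noncomputable section

/-- The shift radix system map `τ_r : ℤ² → ℤ²` for `r = (r₀, r₁) ∈ ℝ²`:
`τ_r(z₀, z₁) = (z₁, -⌊r₀ z₀ + r₁ z₁⌋)`. -/
def srsMap (r₀ r₁ : ℝ) : ℤ × ℤ → ℤ × ℤ :=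
  fun z => (z.2, -⌊r₀ * z.1 + r₁ * z.2⌋)

namespace S19

variable (c a b : ℤ)

/-- integer version of the SRS map -/
def tInt (z : ℤ × ℤ) : ℤ × ℤ := (z.2, -((c * z.1 + a * z.2) / b))

def phiP (z : ℤ × ℤ) : Polynomial ℤ := C (c * z.1 + a * z.2) + C (c * z.2) * X

def stepP (f : Polynomial ℤ) : Polynomial ℤ :=
  f.divX - C (f.coeff 0 / b) * (C c * X + C a)

def PP : Polynomial ℤ := C c * X ^ 2 + C a * X + C b

lemma floor_div_int (m : ℤ) (hb : 0 < b) : ⌊(m : ℝ) / (b : ℝ)⌋ = m / b := by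
  have hb0 : (0:ℝ) < (b:ℝ) := by exact_mod_cast hb
  have key : (b:ℝ) * ((m/b : ℤ):ℝ) + ((m % b : ℤ):ℝ) = (m:ℝ) := by
    exact_mod_cast congrArg (fun x : ℤ => (x:ℝ)) (Int.mul_ediv_add_emod m b)
  have h1 : (0:ℝ) ≤ ((m % b : ℤ):ℝ) := by exact_mod_cast Int.emod_nonneg m (ne_of_gt hb)
  have h2 : ((m % b : ℤ):ℝ) < (b:ℝ) := by exact_mod_cast Int.emod_lt_of_pos m hb
  rw [Int.floor_eq_iff]
  constructor
  · rw [le_div_iff₀ hb0]; nlinarith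
  · rw [div_lt_iff₀ hb0]; push_cast; nlinarith

lemma srs_eq_tInt (hb : 0 < b) :
    srsMap ((c : ℝ) / (b : ℝ)) ((a : ℝ) / (b : ℝ)) = tInt c a b := by
  funext z
  unfold srsMap tInt
  have : (c : ℝ) / b * (z.1 : ℝ) + (a : ℝ) / b * (z.2 : ℝ)
      = ((c * z.1 + a * z.2 : ℤ) : ℝ) / (b : ℝ) := by
    push_cast
    field_simp
  rw [this, floor_div_int _ _ hb]


lemma coeff0_lin (s t : ℤ) : (C s + C t * X).coeff 0 = s := by simp

lemma coeff1_lin (s t : ℤ) : (C s + C t * X).coeff 1 = t := by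
  rw [coeff_add, coeff_C]
  simp

lemma step_spec (f : Polynomial ℤ) :
    f - (C (f.coeff 0 % b) + X * stepP c a b f) = C (f.coeff 0 / b) * PP c a b := by
  have hdiv : X * f.divX = f - C (f.coeff 0) := by
    have := X_mul_divX_add f
    linear_combination this
  have hmod : f.coeff 0 % b + b * (f.coeff 0 / b) = f.coeff 0 := Int.emod_add_mul_ediv _ _
  unfold stepP PP
  rw [mul_sub, hdiv]
  have : C (f.coeff 0 % b) = C (f.coeff 0) - C (b * (f.coeff 0 / b)) := by
    rw [← C_sub]; congr 1; omega
  rw [this]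
  have hcb : C (b * (f.coeff 0 / b)) = C (f.coeff 0 / b) * C b := by
    rw [← C_mul]; ring_nf
  rw [hcb]
  ring

lemma dvd_step (f : Polynomial ℤ) :
    PP c a b ∣ f - (C (f.coeff 0 % b) + X * stepP c a b f) :=
  Dvd.intro_left _ (step_spec c a b f).symm

lemma natDegree_stepP_le (f : Polynomial ℤ) :
    (stepP c a b f).natDegree ≤ max (f.natDegree - 1) 1 := by
  unfold stepP
  refine le_trans (natDegree_sub_le _ _) ?_
  apply max_le_max
  · rw [natDegree_divX_eq_natDegree_tsub_one]
  · refine le_trans (natDegree_C_mul_le _ _) ?_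
    calc (C c * X + C a).natDegree ≤ max (C c * X).natDegree (C a).natDegree :=
          natDegree_add_le _ _
      _ ≤ 1 := by
          apply max_le
          · exact (natDegree_C_mul_le _ _).trans (by simp)
          · simp

lemma natDegree_stepP_le' (f : Polynomial ℤ) :
    (stepP c a b f).natDegree ≤ max (f.natDegree - 1) 1 := natDegree_stepP_le c a b f

lemma iterate_natDegree (k : ℕ) : ∀ f : Polynomial ℤ, f.natDegree ≤ k + 1 →
    ((stepP c a b)^[k] f).natDegree ≤ 1 := by
  induction k with
  | zero => intro f hf; simpa using hf
  | succ n ih =>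
    intro f hf
    rw [Function.iterate_succ_apply]
    apply ih
    refine (natDegree_stepP_le c a b f).trans ?_
    apply max_le <;> omega

lemma divX_of_natDegree_le_one (f : Polynomial ℤ) (hf : f.natDegree ≤ 1) :
    f.divX = C (f.coeff 1) := by
  ext n
  rw [coeff_divX, coeff_C]
  rcases Nat.eq_zero_or_pos n with h | h
  · simp [h]
  · have : f.natDegree < n + 1 := by omega
    rw [coeff_eq_zero_of_natDegree_lt this]
    simp [Nat.pos_iff_ne_zero.mp h]

lemma stepP_lin (s t : ℤ) :
    stepP c a b (C s + C t * X) = C (t - s / b * a) + C (-(s / b * c)) * X := by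
  unfold stepP
  rw [divX_of_natDegree_le_one, coeff0_lin, coeff1_lin]
  · rw [C_neg, C_mul, C_sub, C_mul]
    ring
  · refine le_trans (natDegree_add_le _ _) ?_
    apply max_le
    · simp
    · exact (natDegree_C_mul_le _ _).trans (by simp)

lemma stepP_phiP (z : ℤ × ℤ) :
    stepP c a b (phiP c a z) = phiP c a (tInt c a b z) := by
  unfold phiP tInt
  rw [stepP_lin]
  simp only []
  congr 1
  · congr 1; ring
  · congr 1; ring


lemma PP_coeff0 : (PP c a b).coeff 0 = b := by unfold PP; simp

lemma PP_ne_zero (hc : c ≠ 0) : PP c a b ≠ 0 := by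
  intro h
  have := congrArg (fun p => Polynomial.coeff p 2) h
  simp only [PP, coeff_add, coeff_C_mul, coeff_X_pow, coeff_X, coeff_C, coeff_zero] at this
  norm_num at this
  exact hc this

lemma natDegree_PP (hc : c ≠ 0) : (PP c a b).natDegree = 2 :=
  natDegree_quadratic hc

lemma X_dvd_cancel (hb : b ≠ 0) (h : Polynomial ℤ) (hd : PP c a b ∣ X * h) :
    PP c a b ∣ h := by
  obtain ⟨k, hk⟩ := hd
  have h0 : k.coeff 0 = 0 := by
    have := congrArg (fun p => Polynomial.coeff p 0) hk
    simp only [mul_coeff_zero, coeff_X_zero, zero_mul, PP_coeff0] at this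
    exact (mul_eq_zero.mp this.symm).resolve_left hb
  obtain ⟨k', hk'⟩ : X ∣ k := X_dvd_iff.mpr h0
  refine ⟨k', ?_⟩
  have hX : (X : Polynomial ℤ) ≠ 0 := X_ne_zero
  apply mul_left_cancel₀ hX
  rw [hk, hk']
  ring

lemma dvd_small (hc : c ≠ 0) (h : Polynomial ℤ) (hd : PP c a b ∣ h)
    (hdeg : h.natDegree ≤ 1) : h = 0 := by
  by_contra hne
  have := natDegree_le_of_dvd hd hne
  rw [natDegree_PP c a b hc] at this
  omega

lemma natDegree_phiP_le (z : ℤ × ℤ) : (phiP c a z).natDegree ≤ 1 := by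
  unfold phiP
  refine (natDegree_add_le _ _).trans ?_
  apply max_le
  · rw [natDegree_C]; omega
  · exact (natDegree_C_mul_le _ _).trans (by simp)

lemma phiP_eq_zero (hc : c ≠ 0) (z : ℤ × ℤ) (h : phiP c a z = 0) : z = (0, 0) := by
  unfold phiP at h
  have h1 : (C (c * z.1 + a * z.2) + C (c * z.2) * X).coeff 1 = (0 : Polynomial ℤ).coeff 1 := by rw [h]
  have h0 : (C (c * z.1 + a * z.2) + C (c * z.2) * X).coeff 0 = (0 : Polynomial ℤ).coeff 0 := by rw [h]
  rw [coeff1_lin, coeff_zero] at h1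
  rw [coeff0_lin, coeff_zero] at h0
  have hz2 : z.2 = 0 := by
    rcases mul_eq_zero.mp h1 with h | h
    · exact absurd h hc
    · exact h
  have hz1 : z.1 = 0 := by
    rw [hz2] at h0
    rcases mul_eq_zero.mp (by linarith : c * z.1 = 0) with h | h
    · exact absurd h hc
    · exact h
  exact Prod.ext hz1 hz2


def digitsOK (g : Polynomial ℤ) : Prop := ∀ i, 0 ≤ g.coeff i ∧ g.coeff i ≤ b - 1

lemma digitsOK_divX (g : Polynomial ℤ) (hg : digitsOK b g) : digitsOK b g.divX := by
  intro i
  rw [coeff_divX]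
  exact hg (i + 1)

lemma emod_eq_coeff (hb : 0 < b) (g : Polynomial ℤ) (hg : digitsOK b g) (z : ℤ × ℤ)
    (hdvd : PP c a b ∣ phiP c a z - g) :
    (c * z.1 + a * z.2) % b = g.coeff 0 := by
  obtain ⟨k, hk⟩ := hdvd
  have h0 : c * z.1 + a * z.2 - g.coeff 0 = b * k.coeff 0 := by
    have := congrArg (fun p => Polynomial.coeff p 0) hk
    simpa [phiP, mul_coeff_zero, PP_coeff0] using this
  have hg0 := hg 0
  have : c * z.1 + a * z.2 = b * k.coeff 0 + g.coeff 0 := by omega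
  rw [this, add_comm, Int.add_mul_emod_self_left]
  exact Int.emod_eq_of_lt hg0.1 (by omega)

lemma key_step (hb : 0 < b) (g : Polynomial ℤ) (hg : digitsOK b g) (z : ℤ × ℤ)
    (hdvd : PP c a b ∣ phiP c a z - g) :
    PP c a b ∣ phiP c a (tInt c a b z) - g.divX := by
  apply X_dvd_cancel c a b (by omega : b ≠ 0)
  have h1 : PP c a b ∣ phiP c a z - (C ((phiP c a z).coeff 0 % b) + X * stepP c a b (phiP c a z)) :=
    dvd_step c a b _
  rw [stepP_phiP] at h1
  have hc0 : (phiP c a z).coeff 0 = c * z.1 + a * z.2 := coeff0_lin _ _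
  rw [hc0, emod_eq_coeff c a b hb g hg z hdvd] at h1
  have h2 : X * g.divX = g - C (g.coeff 0) := by
    have := X_mul_divX_add g
    linear_combination this
  have : X * (phiP c a (tInt c a b z) - g.divX)
      = (phiP c a z - g) - (phiP c a z - (C (g.coeff 0) + X * phiP c a (tInt c a b z))) := by
    rw [mul_sub, h2]; ring
  rw [this]
  exact dvd_sub hdvd h1

lemma cns_to_srs_aux (hb : 0 < b) (hc : c ≠ 0) :
    ∀ N : ℕ, ∀ g : Polynomial ℤ, ∀ z : ℤ × ℤ, digitsOK b g → g.natDegree ≤ N →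
    PP c a b ∣ phiP c a z - g → ∃ k, (tInt c a b)^[k] z = (0, 0) := by
  intro N
  induction N with
  | zero =>
    intro g z hg hdeg hdvd
    have h1 := key_step c a b hb g hg z hdvd
    have hdivX : g.divX = 0 := by
      rw [Polynomial.eq_C_of_natDegree_eq_zero (by omega : g.natDegree = 0)]
      exact divX_C _
    rw [hdivX, sub_zero] at h1
    have := dvd_small c a b hc _ h1 (natDegree_phiP_le c a _)
    have hz := phiP_eq_zero c a hc _ this
    exact ⟨1, by simpa using hz⟩
  | succ n ih =>
    intro g z hg hdeg hdvd
    have h1 := key_step c a b hb g hg z hdvd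
    obtain ⟨k, hk⟩ := ih g.divX (tInt c a b z) (digitsOK_divX b g hg)
      (by rw [natDegree_divX_eq_natDegree_tsub_one]; omega) h1
    exact ⟨k + 1, by rwa [Function.iterate_succ_apply]⟩


lemma exp_dvd (f : Polynomial ℤ) : ∀ k : ℕ,
    PP c a b ∣ f - ((∑ i ∈ Finset.range k, C (((stepP c a b)^[i] f).coeff 0 % b) * X ^ i)
      + X ^ k * (stepP c a b)^[k] f) := by
  intro k
  induction k with
  | zero => simp
  | succ n ih =>
    have hstep := dvd_step c a b ((stepP c a b)^[n] f)
    have hstep' : PP c a b ∣ X ^ n * ((stepP c a b)^[n] f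
        - (C (((stepP c a b)^[n] f).coeff 0 % b) + X * stepP c a b ((stepP c a b)^[n] f))) :=
      Dvd.dvd.mul_left hstep _
    have heq : f - ((∑ i ∈ Finset.range (n + 1), C (((stepP c a b)^[i] f).coeff 0 % b) * X ^ i)
        + X ^ (n + 1) * (stepP c a b)^[n + 1] f)
      = (f - ((∑ i ∈ Finset.range n, C (((stepP c a b)^[i] f).coeff 0 % b) * X ^ i)
        + X ^ n * (stepP c a b)^[n] f))
        + X ^ n * ((stepP c a b)^[n] f
        - (C (((stepP c a b)^[n] f).coeff 0 % b) + X * stepP c a b ((stepP c a b)^[n] f))) := by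
      rw [Finset.sum_range_succ, Function.iterate_succ_apply']
      ring
    rw [heq]
    exact dvd_add ih hstep'

lemma two_step (f : Polynomial ℤ) (hf : f.natDegree ≤ 1) :
    ∃ z : ℤ × ℤ, stepP c a b (stepP c a b f) = phiP c a z := by
  have hform : f = C (f.coeff 0) + C (f.coeff 1) * X := by
    conv_lhs => rw [eq_X_add_C_of_degree_le_one (natDegree_le_iff_degree_le.mp hf)]
    ring
  set s := f.coeff 0
  set t := f.coeff 1
  rw [hform, stepP_lin]
  set q := s / b
  rw [stepP_lin]
  set q' := (t - q * a) / b
  refine ⟨(-q, -q'), ?_⟩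
  unfold phiP
  simp only []
  congr 1
  · congr 1; ring
  · congr 1; ring

lemma srs_to_cns (hb : 0 < b) (hc : c ≠ 0)
    (hsrs : ∀ z : ℤ × ℤ, ∃ k, (tInt c a b)^[k] z = (0, 0)) (f : Polynomial ℤ) :
    ∃ g : Polynomial ℤ, digitsOK b g ∧ PP c a b ∣ f - g := by
  obtain ⟨z, hz⟩ := two_step c a b ((stepP c a b)^[f.natDegree] f)
    (iterate_natDegree c a b f.natDegree f (by omega))
  obtain ⟨m, hm⟩ := hsrs z
  have hphi : (stepP c a b)^[m] (phiP c a z) = phiP c a ((tInt c a b)^[m] z) := by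
    clear hz hm
    induction m generalizing z with
    | zero => simp
    | succ n ih =>
      rw [Function.iterate_succ_apply, Function.iterate_succ_apply, stepP_phiP, ih]
  have hzero : (stepP c a b)^[f.natDegree + 2 + m] f = 0 := by
    have h1 : (stepP c a b)^[f.natDegree + 2 + m] f
        = (stepP c a b)^[m] ((stepP c a b)^[2] ((stepP c a b)^[f.natDegree] f)) := by
      rw [← Function.iterate_add_apply, ← Function.iterate_add_apply]
      congr 1
      omega
    rw [h1]
    have h2 : (stepP c a b)^[2] ((stepP c a b)^[f.natDegree] f) = phiP c a z := by
      simpa [Function.iterate_succ_apply', Function.iterate_one] using hz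
    rw [h2, hphi, hm]
    unfold phiP
    simp
  set K := f.natDegree + 2 + m
  refine ⟨∑ i ∈ Finset.range K, C (((stepP c a b)^[i] f).coeff 0 % b) * X ^ i, ?_, ?_⟩
  · intro i
    rw [finset_sum_coeff]
    have : ∀ j ∈ Finset.range K, (C (((stepP c a b)^[j] f).coeff 0 % b) * X ^ j).coeff i
        = if i = j then ((stepP c a b)^[j] f).coeff 0 % b else 0 := by
      intro j _
      rw [coeff_C_mul, coeff_X_pow]
      split <;> simp_all
    rw [Finset.sum_congr rfl this]
    by_cases hi : i ∈ Finset.range K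
    · rw [Finset.sum_ite_eq (Finset.range K) i]
      simp only [hi, if_true]
      constructor
      · exact Int.emod_nonneg _ (by omega)
      · have := Int.emod_lt_of_pos (((stepP c a b)^[i] f).coeff 0) hb
        omega
    · have : ∀ j ∈ Finset.range K, (if i = j then ((stepP c a b)^[j] f).coeff 0 % b else 0) = 0 := by
        intro j hj
        split
        · subst_vars; exact absurd hj hi
        · rfl
      rw [Finset.sum_congr rfl this, Finset.sum_const_zero]
      omega
  · have := exp_dvd c a b f K
    rwa [hzero, mul_zero, add_zero] at this


/-- For `b < 0` no `z` in the invariant set ever reaches the origin. -/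
lemma srs_neg_b (hc : 1 ≤ c) (hbneg : b < 0) :
    ¬ (∀ z : ℤ × ℤ, ∃ k : ℕ,
        (srsMap ((c : ℝ) / (b : ℝ)) ((a : ℝ) / (b : ℝ)))^[k] z = (0, 0)) := by
  set r₀ : ℝ := (c : ℝ) / (b : ℝ) with hr₀
  set r₁ : ℝ := (a : ℝ) / (b : ℝ) with hr₁
  have hbR : (b : ℝ) < 0 := by exact_mod_cast hbneg
  have hcR : (1 : ℝ) ≤ (c : ℝ) := by exact_mod_cast hc
  have hr₀neg : r₀ < 0 := div_neg_of_pos_of_neg (by linarith) hbR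
  intro hall
  by_cases ha : 0 ≤ a
  · -- invariant: (1 ≤ z₁ ∧ 0 ≤ z₂) ∨ (0 ≤ z₁ ∧ 1 ≤ z₂)
    have hr₁ : r₁ ≤ 0 := div_nonpos_of_nonneg_of_nonpos (by exact_mod_cast ha) hbR.le
    set Inv : ℤ × ℤ → Prop := fun z => (1 ≤ z.1 ∧ 0 ≤ z.2) ∨ (0 ≤ z.1 ∧ 1 ≤ z.2) with hInv
    have hstep : ∀ z, Inv z → Inv (srsMap r₀ r₁ z) := by
      rintro ⟨z₁, z₂⟩ (⟨h1, h2⟩ | ⟨h1, h2⟩)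
      · right
        constructor
        · simpa [srsMap] using h2
        · have harg : r₀ * (z₁ : ℝ) + r₁ * (z₂ : ℝ) < 0 := by
            have t1 : r₀ * (z₁ : ℝ) ≤ r₀ * 1 := by
              apply mul_le_mul_of_nonpos_left (by exact_mod_cast h1) hr₀neg.le
            have t2 : r₁ * (z₂ : ℝ) ≤ 0 :=
              mul_nonpos_of_nonpos_of_nonneg hr₁ (by exact_mod_cast h2)
            nlinarith
          have : ⌊r₀ * (z₁ : ℝ) + r₁ * (z₂ : ℝ)⌋ < 0 := by
            rw [Int.floor_lt]
            exact_mod_cast harg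
          simp only [srsMap]
          omega
      · left
        constructor
        · simpa [srsMap] using h2
        · have harg : r₀ * (z₁ : ℝ) + r₁ * (z₂ : ℝ) ≤ 0 := by
            have t1 : r₀ * (z₁ : ℝ) ≤ 0 :=
              mul_nonpos_of_nonpos_of_nonneg hr₀neg.le (by exact_mod_cast h1)
            have t2 : r₁ * (z₂ : ℝ) ≤ 0 :=
              mul_nonpos_of_nonpos_of_nonneg hr₁
                (by exact_mod_cast (show (0:ℤ) ≤ z₂ by simp only [] at h2; omega))
            linarith
          have : ⌊r₀ * (z₁ : ℝ) + r₁ * (z₂ : ℝ)⌋ ≤ 0 := Int.floor_nonpos harg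
          simp only [srsMap]
          omega
    have hInv0 : Inv (1, 0) := by left; constructor <;> norm_num
    have hInviter : ∀ k, Inv ((srsMap r₀ r₁)^[k] (1, 0)) := by
      intro k
      induction k with
      | zero => simpa using hInv0
      | succ n ih => rw [Function.iterate_succ_apply']; exact hstep _ ih
    obtain ⟨k, hk⟩ := hall (1, 0)
    have := hInviter k
    rw [hk] at this
    rcases this with ⟨h, _⟩ | ⟨_, h⟩ <;> simp at h
  · -- a < 0 : invariant (1 ≤ z₁ ∧ z₂ ≤ 0) ∨ (z₁ ≤ 0 ∧ 1 ≤ z₂)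
    push_neg at ha
    have hr₁ : 0 ≤ r₁ := by
      have : r₁ = (-(a:ℝ)) / (-(b:ℝ)) := by rw [hr₁]; ring
      rw [this]
      apply div_nonneg <;> [skip; linarith]
      have : (a:ℝ) < 0 := by exact_mod_cast ha
      linarith
    set Inv : ℤ × ℤ → Prop := fun z => (1 ≤ z.1 ∧ z.2 ≤ 0) ∨ (z.1 ≤ 0 ∧ 1 ≤ z.2) with hInv
    have hstep : ∀ z, Inv z → Inv (srsMap r₀ r₁ z) := by
      rintro ⟨z₁, z₂⟩ (⟨h1, h2⟩ | ⟨h1, h2⟩)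
      · right
        constructor
        · simpa [srsMap] using h2
        · have harg : r₀ * (z₁ : ℝ) + r₁ * (z₂ : ℝ) < 0 := by
            have t1 : r₀ * (z₁ : ℝ) ≤ r₀ * 1 := by
              apply mul_le_mul_of_nonpos_left (by exact_mod_cast h1) hr₀neg.le
            have t2 : r₁ * (z₂ : ℝ) ≤ 0 :=
              mul_nonpos_of_nonneg_of_nonpos hr₁ (by exact_mod_cast h2)
            nlinarith
          have : ⌊r₀ * (z₁ : ℝ) + r₁ * (z₂ : ℝ)⌋ < 0 := by
            rw [Int.floor_lt]
            exact_mod_cast harg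
          simp only [srsMap]
          omega
      · left
        constructor
        · simpa [srsMap] using h2
        · have harg : 0 ≤ r₀ * (z₁ : ℝ) + r₁ * (z₂ : ℝ) := by
            have t1 : 0 ≤ r₀ * (z₁ : ℝ) := by
              have hz1 : (z₁ : ℝ) ≤ 0 := by exact_mod_cast (show z₁ ≤ (0:ℤ) from h1)
              nlinarith
            have t2 : 0 ≤ r₁ * (z₂ : ℝ) := mul_nonneg hr₁
              (by exact_mod_cast (show (0:ℤ) ≤ z₂ by simp only [] at h2; omega))
            linarith
          have : 0 ≤ ⌊r₀ * (z₁ : ℝ) + r₁ * (z₂ : ℝ)⌋ := by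
            rw [Int.le_floor]
            exact_mod_cast harg
          simp only [srsMap]
          omega
    have hInv0 : Inv (1, 0) := by left; constructor <;> norm_num
    have hInviter : ∀ k, Inv ((srsMap r₀ r₁)^[k] (1, 0)) := by
      intro k
      induction k with
      | zero => simpa using hInv0
      | succ n ih => rw [Function.iterate_succ_apply']; exact hstep _ ih
    obtain ⟨k, hk⟩ := hall (1, 0)
    have := hInviter k
    rw [hk] at this
    rcases this with ⟨h, _⟩ | ⟨_, h⟩ <;> simp at h


lemma cns_neg_b (hc : 1 ≤ c) (hbneg : b < 0) (P : Polynomial ℤ)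
    (hP : P = C c * X ^ 2 + C a * X + C b) :
    ¬ (∀ r : Polynomial ℤ ⧸ Ideal.span {P},
      ∃ (ℓ : ℕ) (dd : ℕ → ℤ),
        (∀ i ≤ ℓ, 0 ≤ dd i ∧ dd i ≤ |b| - 1) ∧
        r = ∑ i ∈ Finset.range (ℓ + 1),
          (dd i : Polynomial ℤ ⧸ Ideal.span {P}) *
            (Ideal.Quotient.mk (Ideal.span {P}) X) ^ i) := by
  intro hall
  set θ : ℝ := (-(a:ℝ) + Real.sqrt ((a:ℝ)^2 - 4*(c:ℝ)*(b:ℝ))) / (2*(c:ℝ)) with hθ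
  have hcR : (1:ℝ) ≤ (c:ℝ) := by exact_mod_cast hc
  have hbR : (b:ℝ) < 0 := by exact_mod_cast hbneg
  have hdisc : (0:ℝ) ≤ (a:ℝ)^2 - 4*(c:ℝ)*(b:ℝ) := by nlinarith
  have hsq : Real.sqrt ((a:ℝ)^2 - 4*(c:ℝ)*(b:ℝ)) ^ 2 = (a:ℝ)^2 - 4*(c:ℝ)*(b:ℝ) :=
    Real.sq_sqrt hdisc
  have hsgt : |(a:ℝ)| < Real.sqrt ((a:ℝ)^2 - 4*(c:ℝ)*(b:ℝ)) := by
    have h1 : (a:ℝ)^2 < (a:ℝ)^2 - 4*(c:ℝ)*(b:ℝ) := by nlinarith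
    have := Real.sqrt_lt_sqrt (by positivity) h1
    rwa [Real.sqrt_sq_eq_abs] at this
  have hθpos : 0 < θ := by
    rw [hθ]
    apply div_pos
    · have h1 : (a:ℝ) ≤ |(a:ℝ)| := le_abs_self _
      linarith
    · linarith
  have hroot : (c:ℝ) * θ^2 + (a:ℝ) * θ + (b:ℝ) = 0 := by
    rw [hθ]
    have hc0 : (2*(c:ℝ)) ≠ 0 := by linarith
    field_simp
    ring_nf
    ring_nf at hsq
    nlinarith [hsq]
  -- the evaluation ring hom
  set ev : Polynomial ℤ →+* ℝ := (Polynomial.aeval θ : Polynomial ℤ →ₐ[ℤ] ℝ).toRingHom with hev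
  have hevP : ev P = 0 := by
    rw [hP]
    simp only [hev, AlgHom.toRingHom_eq_coe, RingHom.coe_coe, map_add, map_mul, map_pow,
      Polynomial.aeval_X, Polynomial.aeval_C]
    have hC : ∀ m : ℤ, (algebraMap ℤ ℝ) m = (m : ℝ) := fun m => by simp
    rw [hC, hC, hC]
    linarith [hroot]
  have hker : ∀ g ∈ Ideal.span ({P} : Set (Polynomial ℤ)), ev g = 0 := by
    intro g hg
    obtain ⟨k, rfl⟩ := Ideal.mem_span_singleton.mp hg
    rw [map_mul, hevP, zero_mul]
  set ψ : (Polynomial ℤ ⧸ Ideal.span {P}) →+* ℝ := Ideal.Quotient.lift _ ev hker with hψ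
  obtain ⟨ℓ, dd, hdd, hr⟩ := hall (-1)
  have := congrArg ψ hr
  rw [map_neg, map_one, map_sum] at this
  have hterm : ∀ i ∈ Finset.range (ℓ + 1),
      ψ ((dd i : Polynomial ℤ ⧸ Ideal.span {P}) *
        (Ideal.Quotient.mk (Ideal.span {P}) X) ^ i) = (dd i : ℝ) * θ ^ i := by
    intro i _
    rw [map_mul, map_pow, map_intCast]
    congr 2
    show ψ (Ideal.Quotient.mk _ X) = θ
    rw [hψ, Ideal.Quotient.lift_mk]
    simp [hev]
  rw [Finset.sum_congr rfl hterm] at this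
  have hnonneg : (0:ℝ) ≤ ∑ i ∈ Finset.range (ℓ + 1), (dd i : ℝ) * θ ^ i := by
    apply Finset.sum_nonneg
    intro i hi
    apply mul_nonneg
    · exact_mod_cast (hdd i (Nat.lt_succ_iff.mp (Finset.mem_range.mp hi))).1
    · exact pow_nonneg hθpos.le i
  rw [← this] at hnonneg
  norm_num at hnonneg


lemma coeff_sum_C_X (d : ℕ → ℤ) (n : ℕ) (j : ℕ) :
    (∑ i ∈ Finset.range n, C (d i) * X ^ i).coeff j = if j < n then d j else 0 := by
  rw [finset_sum_coeff]
  have h : ∀ i ∈ Finset.range n, (C (d i) * X ^ i).coeff j = if j = i then d i else 0 := by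
    intro i _
    rw [coeff_C_mul, coeff_X_pow]
    split <;> simp_all
  rw [Finset.sum_congr rfl h, Finset.sum_ite_eq (Finset.range n) j]
  simp only [Finset.mem_range]

lemma mk_sum_eq (P : Polynomial ℤ) (d : ℕ → ℤ) (n : ℕ) :
    (Ideal.Quotient.mk (Ideal.span {P})) (∑ i ∈ Finset.range n, C (d i) * X ^ i)
      = ∑ i ∈ Finset.range n,
          ((d i : Polynomial ℤ ⧸ Ideal.span {P}) * (Ideal.Quotient.mk (Ideal.span {P}) X) ^ i) := by
  rw [map_sum]
  apply Finset.sum_congr rfl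
  intro i _
  rw [map_mul, map_pow,
    show (C (d i) : Polynomial ℤ) = ((d i : ℤ) : Polynomial ℤ) from C_eq_intCast _, map_intCast]

end S19

/-- `P(x) = cx² + ax + b` is a CNS polynomial (every element of
`ℤ[x]/Pℤ[x]` has a finite digit expansion in base `X` with digits
`{0, …, |b| - 1}`) if and only if `(c/b, a/b) ∈ 𝒟₂⁽⁰⁾`, i.e. every `z ∈ ℤ²` is
eventually mapped to `(0,0)` by the shift radix map `τ_{(c/b, a/b)}`. -/
theorem stmt19 (c a b : ℤ) (hc : 1 ≤ c) (hb : b ≠ 0)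
    (P : Polynomial ℤ)
    (hP : P = Polynomial.C c * X ^ 2 + Polynomial.C a * X + Polynomial.C b) :
    (∀ r : Polynomial ℤ ⧸ Ideal.span {P},
      ∃ (ℓ : ℕ) (dd : ℕ → ℤ),
        (∀ i ≤ ℓ, 0 ≤ dd i ∧ dd i ≤ |b| - 1) ∧
        r = ∑ i ∈ Finset.range (ℓ + 1),
          (dd i : Polynomial ℤ ⧸ Ideal.span {P}) *
            (Ideal.Quotient.mk (Ideal.span {P}) X) ^ i)
    ↔ (∀ z : ℤ × ℤ, ∃ k : ℕ,
        (srsMap ((c : ℝ) / (b : ℝ)) ((a : ℝ) / (b : ℝ)))^[k] z = (0, 0)) := by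
  rcases lt_or_gt_of_ne hb with hbneg | hbpos
  · constructor
    · intro h
      exact absurd h (S19.cns_neg_b c a b hc hbneg P hP)
    · intro h
      exact absurd h (S19.srs_neg_b c a b hc hbneg)
  · -- b > 0
    have hc0 : c ≠ 0 := by omega
    have habs : |b| = b := abs_of_pos hbpos
    have hPP : P = S19.PP c a b := hP
    have hsrst : srsMap ((c : ℝ) / (b : ℝ)) ((a : ℝ) / (b : ℝ)) = S19.tInt c a b :=
      S19.srs_eq_tInt c a b hbpos
    constructor
    · intro hcns z
      obtain ⟨ℓ, dd, hdd, hr⟩ := hcns (Ideal.Quotient.mk _ (S19.phiP c a z))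
      simp only [habs] at hdd
      set g : Polynomial ℤ := ∑ i ∈ Finset.range (ℓ + 1), C (dd i) * X ^ i with hg
      have hmk : Ideal.Quotient.mk (Ideal.span {P}) (S19.phiP c a z)
          = Ideal.Quotient.mk (Ideal.span {P}) g := by
        rw [hr, hg, S19.mk_sum_eq]
      have hdvd : S19.PP c a b ∣ S19.phiP c a z - g := by
        rw [← hPP, ← Ideal.mem_span_singleton]
        exact (Ideal.Quotient.eq).mp hmk
      have hgOK : S19.digitsOK b g := by
        intro j
        rw [hg, S19.coeff_sum_C_X]
        split
        · have := hdd j (by omega)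
          omega
        · omega
      obtain ⟨k, hk⟩ := S19.cns_to_srs_aux c a b hbpos hc0 g.natDegree g z hgOK le_rfl hdvd
      exact ⟨k, by rw [hsrst]; exact hk⟩
    · intro hsrs r
      obtain ⟨f, rfl⟩ := Ideal.Quotient.mk_surjective r
      have hsrs' : ∀ z : ℤ × ℤ, ∃ k, (S19.tInt c a b)^[k] z = (0, 0) := by
        intro z
        obtain ⟨k, hk⟩ := hsrs z
        exact ⟨k, by rw [← hsrst]; exact hk⟩
      obtain ⟨g, hgOK, hdvd⟩ := S19.srs_to_cns c a b hbpos hc0 hsrs' f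
      refine ⟨g.natDegree, fun i => g.coeff i, ?_, ?_⟩
      · intro i _
        refine ⟨(hgOK i).1, ?_⟩
        rw [habs]
        exact (hgOK i).2
      · have hgsum : g = ∑ i ∈ Finset.range (g.natDegree + 1), C (g.coeff i) * X ^ i := by
          conv_lhs => rw [Polynomial.as_sum_range' g (g.natDegree + 1) (Nat.lt_succ_self _)]
          apply Finset.sum_congr rfl
          intro i _
          rw [Polynomial.C_mul_X_pow_eq_monomial]
        rw [← S19.mk_sum_eq, ← hgsum]
        apply (Ideal.Quotient.eq).mpr
        rw [Ideal.mem_span_singleton, hPP]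
        exact hdvd
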